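/- For every natural number n, the coefficient of x^n y^n z^n in the formal power series inverse of 1 - (x + y + z) + (xy + yz + zx) (a power series with constant term 1, hence invertible) equals ∑_{s=0}^{n} (-1)^s (binom(n,s))^3. -/

import Mathlib

open MvPowerSeries

noncomputable def Fq (a b c : ℕ) : ℚ :=
  ∑ s ∈ Finset.range (a + 1),
    (-1 : ℚ) ^ s * (a.choose s : ℚ) * (b.choose s : ℚ) * (c.choose s : ℚ)

lemma Fq_ext (a b c m : ℕ) (h : a < m) :
    Fq a b c = ∑ s ∈ Finset.range m,
      (-1 : ℚ) ^ s * (a.choose s : ℚ) * (b.choose s : ℚ) * (c.choose s : ℚ) := by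
  apply Finset.sum_subset
  · exact Finset.range_subset_range.2 h
  · intro s _ hs
    simp only [Finset.mem_range, not_lt] at hs
    rw [Nat.choose_eq_zero_of_lt hs]
    simp

lemma Fq_left0 (b c : ℕ) : Fq 0 b c = 1 := by simp [Fq]

lemma Fq_mid0 (a c : ℕ) : Fq a 0 c = 1 := by
  rw [Fq, Finset.sum_eq_single 0]
  · simp
  · intro s _ hs
    rw [Nat.choose_eq_zero_of_lt (Nat.pos_of_ne_zero hs)]; simp
  · simp

lemma Fq_right0 (a b : ℕ) : Fq a b 0 = 1 := by
  rw [Fq, Finset.sum_eq_single 0]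
  · simp
  · intro s _ hs
    rw [Nat.choose_eq_zero_of_lt (Nat.pos_of_ne_zero hs)]; simp
  · simp

lemma Fq_key (a b c : ℕ) :
    Fq (a+1) (b+1) (c+1)
      - (Fq a (b+1) (c+1) + Fq (a+1) b (c+1) + Fq (a+1) (b+1) c)
      + (Fq a b (c+1) + Fq a (b+1) c + Fq (a+1) b c) = 0 := by
  have D : ∀ x y z : ℕ, Fq x y z = ∑ s ∈ Finset.range (a + 2),
      (-1 : ℚ) ^ s * (x.choose s : ℚ) * (y.choose s : ℚ) * (z.choose s : ℚ) →
      True := fun _ _ _ _ => trivial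
  rw [Fq_ext (a+1) (b+1) (c+1) (a+2) (by omega),
      Fq_ext a (b+1) (c+1) (a+2) (by omega),
      Fq_ext (a+1) b (c+1) (a+2) (by omega),
      Fq_ext (a+1) (b+1) c (a+2) (by omega),
      Fq_ext a b (c+1) (a+2) (by omega),
      Fq_ext a (b+1) c (a+2) (by omega),
      Fq_ext (a+1) b c (a+2) (by omega)]
  simp only [← Finset.sum_add_distrib, ← Finset.sum_sub_distrib]
  -- per-term rewriting
  have step : ∀ s ∈ Finset.range (a + 2),
      ((-1:ℚ)^s * ((a+1).choose s : ℚ) * ((b+1).choose s : ℚ) * ((c+1).choose s : ℚ)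
        - ((-1:ℚ)^s * (a.choose s : ℚ) * ((b+1).choose s : ℚ) * ((c+1).choose s : ℚ)
          + (-1:ℚ)^s * ((a+1).choose s : ℚ) * (b.choose s : ℚ) * ((c+1).choose s : ℚ)
          + (-1:ℚ)^s * ((a+1).choose s : ℚ) * ((b+1).choose s : ℚ) * (c.choose s : ℚ))
        + ((-1:ℚ)^s * (a.choose s : ℚ) * (b.choose s : ℚ) * ((c+1).choose s : ℚ)
          + (-1:ℚ)^s * (a.choose s : ℚ) * ((b+1).choose s : ℚ) * (c.choose s : ℚ)
          + (-1:ℚ)^s * ((a+1).choose s : ℚ) * (b.choose s : ℚ) * (c.choose s : ℚ)))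
      = (if s = 0 then 1 else
          -((-1:ℚ)^(s-1) * (a.choose (s-1) : ℚ) * (b.choose (s-1) : ℚ) * (c.choose (s-1) : ℚ)))
        + (-1:ℚ)^s * (a.choose s : ℚ) * (b.choose s : ℚ) * (c.choose s : ℚ)
        - (if s = 0 then 1 else 0) := by
    intro s _
    rcases s with _ | t
    · norm_num
    · simp only [Nat.succ_ne_zero, if_false, Nat.add_sub_cancel]
      have ha : (((a+1).choose (t+1) : ℚ)) = (a.choose t : ℚ) + (a.choose (t+1) : ℚ) := by
        rw [Nat.choose_succ_succ']; push_cast; ring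
      have hb : (((b+1).choose (t+1) : ℚ)) = (b.choose t : ℚ) + (b.choose (t+1) : ℚ) := by
        rw [Nat.choose_succ_succ']; push_cast; ring
      have hc : (((c+1).choose (t+1) : ℚ)) = (c.choose t : ℚ) + (c.choose (t+1) : ℚ) := by
        rw [Nat.choose_succ_succ']; push_cast; ring
      rw [ha, hb, hc, pow_succ]
      ring
  rw [Finset.sum_congr rfl step]
  simp only [Finset.sum_add_distrib, Finset.sum_sub_distrib]
  have h1 : ∑ s ∈ Finset.range (a+2), (if s = 0 then (1:ℚ) else
      -((-1:ℚ)^(s-1) * (a.choose (s-1) : ℚ) * (b.choose (s-1) : ℚ) * (c.choose (s-1) : ℚ)))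
      = 1 - Fq a b c := by
    rw [Finset.sum_range_succ']
    simp only [Nat.succ_ne_zero, if_false, if_true, Nat.add_sub_cancel, Fq,
      Finset.sum_neg_distrib]
    ring
  have h2 : ∑ s ∈ Finset.range (a+2),
      (-1:ℚ)^s * (a.choose s : ℚ) * (b.choose s : ℚ) * (c.choose s : ℚ) = Fq a b c :=
    (Fq_ext a b c (a+2) (by omega)).symm
  have h3 : ∑ s ∈ Finset.range (a+2), (if s = 0 then (1:ℚ) else 0) = 1 := by
    rw [Finset.sum_ite_eq' (Finset.range (a+2)) 0 (fun _ => (1:ℚ))]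
    simp
  rw [h1, h2, h3]
  ring

noncomputable def gS : MvPowerSeries (Fin 3) ℚ := fun d => Fq (d 0) (d 1) (d 2)

lemma coeff_gS (d : Fin 3 →₀ ℕ) : coeff d gS = Fq (d 0) (d 1) (d 2) := rfl

lemma coeff_gS_X (d : Fin 3 →₀ ℕ) (i : Fin 3) :
    coeff d (gS * X i) =
      if 1 ≤ d i then
        Fq (d 0 - if i = 0 then 1 else 0) (d 1 - if i = 1 then 1 else 0)
          (d 2 - if i = 2 then 1 else 0)
      else 0 := by
  rw [X_def, coeff_mul_monomial]
  simp only [Finsupp.single_le_iff]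
  split
  · rw [coeff_gS, mul_one]
    congr 1 <;> simp [Finsupp.tsub_apply, Finsupp.single_apply]
  · rfl

lemma pair_cond (d : Fin 3 →₀ ℕ) (i j : Fin 3) (hij : i ≠ j) :
    ((Finsupp.single i 1 + Finsupp.single j 1 : Fin 3 →₀ ℕ) ≤ d)
      ↔ (1 ≤ d i ∧ 1 ≤ d j) := by
  rw [Finsupp.le_def]
  constructor
  · intro h
    refine ⟨?_, ?_⟩
    · have := h i
      simp only [Finsupp.add_apply, Finsupp.single_apply, if_pos rfl] at this
      rw [if_neg (fun h' => hij (h' ▸ rfl) : ¬ j = i)] at this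
      exact le_trans (by norm_num) this
    · have := h j
      simp only [Finsupp.add_apply, Finsupp.single_apply, if_pos rfl] at this
      rw [if_neg hij] at this
      exact le_trans (by norm_num) this
  · rintro ⟨h1, h2⟩ k
    simp only [Finsupp.add_apply, Finsupp.single_apply]
    rcases eq_or_ne i k with rfl | hik
    · rw [if_pos rfl, if_neg (fun h' => hij (h' ▸ rfl) : ¬ j = i)]
      omega
    · rcases eq_or_ne j k with rfl | hjk
      · rw [if_neg hik, if_pos rfl]; omega
      · rw [if_neg hik, if_neg hjk]; omega

lemma coeff_gS_XX (d : Fin 3 →₀ ℕ) (i j : Fin 3) (hij : i ≠ j) :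
    coeff d (gS * (X i * X j)) =
      if 1 ≤ d i ∧ 1 ≤ d j then
        Fq (d 0 - ((if i = 0 then 1 else 0) + if j = 0 then 1 else 0))
          (d 1 - ((if i = 1 then 1 else 0) + if j = 1 then 1 else 0))
          (d 2 - ((if i = 2 then 1 else 0) + if j = 2 then 1 else 0))
      else 0 := by
  rw [show (X i * X j : MvPowerSeries (Fin 3) ℚ)
    = monomial (Finsupp.single i 1 + Finsupp.single j 1) 1 by
      rw [X_def, X_def, monomial_mul_monomial, one_mul],
    coeff_mul_monomial]
  simp only [pair_cond d i j hij]
  split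
  · rw [coeff_gS, mul_one]
    congr 1 <;> simp [Finsupp.tsub_apply, Finsupp.add_apply, Finsupp.single_apply]
  · rfl

lemma gS_mul :
    gS * (1 - (X 0 + X 1 + X 2) + (X 0 * X 1 + X 1 * X 2 + X 2 * X 0) :
      MvPowerSeries (Fin 3) ℚ) = 1 := by
  ext d
  have expand : gS * (1 - (X 0 + X 1 + X 2) + (X 0 * X 1 + X 1 * X 2 + X 2 * X 0) :
      MvPowerSeries (Fin 3) ℚ)
    = gS - (gS * X 0 + gS * X 1 + gS * X 2)
      + (gS * (X 0 * X 1) + gS * (X 1 * X 2) + gS * (X 2 * X 0)) := by ring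
  rw [expand]
  simp only [map_add, map_sub, coeff_gS, coeff_gS_X,
    coeff_gS_XX d 0 1 (by decide), coeff_gS_XX d 1 2 (by decide),
    coeff_gS_XX d 2 0 (by decide), coeff_one]
  norm_num
  have hd0 : (d = 0) ↔ (d 0 = 0 ∧ d 1 = 0 ∧ d 2 = 0) := by
    constructor
    · rintro rfl; simp
    · rintro ⟨h0, h1, h2⟩
      ext i
      fin_cases i <;> simpa
  rcases h0 : d 0 with _ | a <;> rcases h1 : d 1 with _ | b <;> rcases h2 : d 2 with _ | c <;>
    simp_all [Nat.succ_sub_one] <;>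
    first
      | rfl
      | (rw [Fq_left0, Fq_mid0, Fq_right0]; ring)
      | (simp [Fq_left0, Fq_mid0, Fq_right0])
      | (have := Fq_key a b c; linarith)

/-- The coefficient of `xⁿyⁿzⁿ` in `1/((1-x)(1-y)(1-z) + xyz)
= 1/(1 - (x+y+z) + (xy+yz+zx))` is the alternating sum of cubes of binomial
coefficients. -/
theorem diag_coeff_inv (n : ℕ) :
    MvPowerSeries.coeff
        (Finsupp.single (0 : Fin 3) n + Finsupp.single 1 n + Finsupp.single 2 n)
        ((1 - (X 0 + X 1 + X 2) + (X 0 * X 1 + X 1 * X 2 + X 2 * X 0) :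
            MvPowerSeries (Fin 3) ℚ)⁻¹) =
      ∑ s ∈ Finset.range (n + 1), (-1 : ℚ) ^ s * (n.choose s : ℚ) ^ 3 := by
  have hconst : constantCoeff
      (1 - (X 0 + X 1 + X 2) + (X 0 * X 1 + X 1 * X 2 + X 2 * X 0) :
        MvPowerSeries (Fin 3) ℚ) ≠ 0 := by
    simp
  have hinv : gS = (1 - (X 0 + X 1 + X 2) + (X 0 * X 1 + X 1 * X 2 + X 2 * X 0) :
      MvPowerSeries (Fin 3) ℚ)⁻¹ :=
    (MvPowerSeries.eq_inv_iff_mul_eq_one hconst).2 gS_mul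
  rw [← hinv, coeff_gS]
  have e0 : ((Finsupp.single (0 : Fin 3) n + Finsupp.single 1 n + Finsupp.single 2 n : Fin 3 →₀ ℕ)) 0 = n := by
    simp
  have e1 : ((Finsupp.single (0 : Fin 3) n + Finsupp.single 1 n + Finsupp.single 2 n : Fin 3 →₀ ℕ)) 1 = n := by
    simp
  have e2 : ((Finsupp.single (0 : Fin 3) n + Finsupp.single 1 n + Finsupp.single 2 n : Fin 3 →₀ ℕ)) 2 = n := by
    simp
  rw [e0, e1, e2, Fq]
  exact Finset.sum_congr rfl fun s _ => by ring
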